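/- Let φ = Σ_{i=0}^4 b_{i,4-i}x^i y^{4-i}/(i!(4-i)!) be a binary quartic and define J₀^φ = φ, J₂^φ = φ_xx φ_yy − φ_xy², J₃^φ = −(φ_y ∂_x(J₂^φ) − φ_x ∂_y(J₂^φ)). Then 9(J₃^φ)² + 16(J₂^φ)³ + 144α(J₀^φ)²J₂^φ + 864δ(J₀^φ)³ = 0 as polynomials in x, y and the coefficients, where α = 4b₁₃b₃₁ − b₄₀b₀₄ − 3b₂₂² and δ = b₂₂b₄₀b₀₄ − b₀₄b₃₁² − b₄₀b₁₃² + 2b₁₃b₂₂b₃₁ − b₂₂³. -/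
import Mathlib

open MvPolynomial

private lemma pd01 : pderiv (0 : Fin 2) (X 1 : MvPolynomial (Fin 2) ℂ) = 0 :=
  pderiv_X_of_ne (by decide)

private lemma pd10 : pderiv (1 : Fin 2) (X 0 : MvPolynomial (Fin 2) ℂ) = 0 :=
  pderiv_X_of_ne (by decide)

set_option maxHeartbeats 1600000 in
/-- The syzygy 9(J₃^φ)² + 16(J₂^φ)³ + 144α(J₀^φ)²J₂^φ + 864δ(J₀^φ)³ = 0
for the binary quartic φ = Σ b_{i,4-i} xⁱy^{4-i}/(i!(4-i)!). -/
theorem quartic_syzygy (b40 b31 b22 b13 b04 : ℂ) :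
    let φ : MvPolynomial (Fin 2) ℂ :=
      C (b40 / 24) * X 0 ^ 4 + C (b31 / 6) * X 0 ^ 3 * X 1
        + C (b22 / 4) * X 0 ^ 2 * X 1 ^ 2 + C (b13 / 6) * X 0 * X 1 ^ 3
        + C (b04 / 24) * X 1 ^ 4
    let φx := pderiv 0 φ
    let φy := pderiv 1 φ
    let J0 := φ
    let J2 := pderiv 0 φx * pderiv 1 φy - (pderiv 1 φx) ^ 2
    let J3 := -(φy * pderiv 0 J2 - φx * pderiv 1 J2)
    let α := 4 * b13 * b31 - b40 * b04 - 3 * b22 ^ 2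
    let δ := b22 * b40 * b04 - b04 * b31 ^ 2 - b40 * b13 ^ 2
        + 2 * b13 * b22 * b31 - b22 ^ 3
    9 * J3 ^ 2 + 16 * J2 ^ 3 + C (144 * α) * J0 ^ 2 * J2 + C (864 * δ) * J0 ^ 3
      = 0 := by
  obtain ⟨a40, rfl⟩ : ∃ a, b40 = 24 * a := ⟨b40 / 24, by ring⟩
  obtain ⟨a31, rfl⟩ : ∃ a, b31 = 6 * a := ⟨b31 / 6, by ring⟩
  obtain ⟨a22, rfl⟩ : ∃ a, b22 = 4 * a := ⟨b22 / 4, by ring⟩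
  obtain ⟨a13, rfl⟩ : ∃ a, b13 = 6 * a := ⟨b13 / 6, by ring⟩
  obtain ⟨a04, rfl⟩ : ∃ a, b04 = 24 * a := ⟨b04 / 24, by ring⟩
  intro φ φx φy J0 J2 J3 α δ
  obtain ⟨c0, hc0⟩ : ∃ x : ℂ, x = 24*a40*a22 - 9*a31^2 := ⟨_, rfl⟩
  obtain ⟨c1, hc1⟩ : ∃ x : ℂ, x = 72*a40*a13 - 12*a31*a22 := ⟨_, rfl⟩
  obtain ⟨c2, hc2⟩ : ∃ x : ℂ, x = 144*a40*a04 + 18*a31*a13 - 12*a22^2 := ⟨_, rfl⟩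
  obtain ⟨c3, hc3⟩ : ∃ x : ℂ, x = 72*a31*a04 - 12*a22*a13 := ⟨_, rfl⟩
  obtain ⟨c4, hc4⟩ : ∃ x : ℂ, x = 24*a22*a04 - 9*a13^2 := ⟨_, rfl⟩
  obtain ⟨d0, hd0⟩ : ∃ x : ℂ, x = 288*a40^2*a13 - 144*a40*a31*a22 + 36*a31^3 := ⟨_, rfl⟩
  obtain ⟨d1, hd1⟩ : ∃ x : ℂ, x = 1152*a40^2*a04 + 144*a40*a31*a13 - 288*a40*a22^2 + 72*a31^2*a22 := ⟨_, rfl⟩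
  obtain ⟨d2, hd2⟩ : ∃ x : ℂ, x = 1440*a40*a31*a04 - 720*a40*a22*a13 + 180*a31^2*a13 := ⟨_, rfl⟩
  obtain ⟨d3, hd3⟩ : ∃ x : ℂ, x = -720*a40*a13^2 + 720*a31^2*a04 := ⟨_, rfl⟩
  obtain ⟨d4, hd4⟩ : ∃ x : ℂ, x = -1440*a40*a13*a04 + 720*a31*a22*a04 - 180*a31*a13^2 := ⟨_, rfl⟩
  obtain ⟨d5, hd5⟩ : ∃ x : ℂ, x = -1152*a40*a04^2 - 144*a31*a13*a04 + 288*a22^2*a04 - 72*a22*a13^2 := ⟨_, rfl⟩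
  obtain ⟨d6, hd6⟩ : ∃ x : ℂ, x = -288*a31*a04^2 + 144*a22*a13*a04 - 36*a13^3 := ⟨_, rfl⟩
  have hφ : φ = C (a40) * X 0 ^ 4 + C (a31) * X 0 ^ 3 * X 1 + C (a22) * X 0 ^ 2 * X 1 ^ 2 + C (a13) * X 0 * X 1 ^ 3 + C (a04) * X 1 ^ 4 := by
    simp only [φ]
    rw [show (24:ℂ) * a40 / 24 = a40 by ring, show (6:ℂ) * a31 / 6 = a31 by ring,
      show (4:ℂ) * a22 / 4 = a22 by ring, show (6:ℂ) * a13 / 6 = a13 by ring,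
      show (24:ℂ) * a04 / 24 = a04 by ring]
  have hpx : pderiv 0 ((C (a40) * X 0 ^ 4 + C (a31) * X 0 ^ 3 * X 1 + C (a22) * X 0 ^ 2 * X 1 ^ 2 + C (a13) * X 0 * X 1 ^ 3 + C (a04) * X 1 ^ 4 : MvPolynomial (Fin 2) ℂ)) = C (4*a40) * X 0 ^ 3 + C (3*a31) * X 0 ^ 2 * X 1 + C (2*a22) * X 0 * X 1 ^ 2 + C (a13) * X 1 ^ 3 := by
    simp only [pderiv_mul, pderiv_pow, pderiv_C, pderiv_X_self, map_add, pd01, pd10, mul_zero, zero_mul, add_zero, zero_add, mul_one, one_mul, Nat.cast_ofNat]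
    simp only [map_mul, map_add, map_sub, map_neg, map_pow, map_ofNat, map_one]
    ring
  have hpy : pderiv 1 ((C (a40) * X 0 ^ 4 + C (a31) * X 0 ^ 3 * X 1 + C (a22) * X 0 ^ 2 * X 1 ^ 2 + C (a13) * X 0 * X 1 ^ 3 + C (a04) * X 1 ^ 4 : MvPolynomial (Fin 2) ℂ)) = C (a31) * X 0 ^ 3 + C (2*a22) * X 0 ^ 2 * X 1 + C (3*a13) * X 0 * X 1 ^ 2 + C (4*a04) * X 1 ^ 3 := by
    simp only [pderiv_mul, pderiv_pow, pderiv_C, pderiv_X_self, map_add, pd01, pd10, mul_zero, zero_mul, add_zero, zero_add, mul_one, one_mul, Nat.cast_ofNat]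
    simp only [map_mul, map_add, map_sub, map_neg, map_pow, map_ofNat, map_one]
    ring
  have hpxx : pderiv 0 ((C (4*a40) * X 0 ^ 3 + C (3*a31) * X 0 ^ 2 * X 1 + C (2*a22) * X 0 * X 1 ^ 2 + C (a13) * X 1 ^ 3 : MvPolynomial (Fin 2) ℂ)) = C (12*a40) * X 0 ^ 2 + C (6*a31) * X 0 * X 1 + C (2*a22) * X 1 ^ 2 := by
    simp only [pderiv_mul, pderiv_pow, pderiv_C, pderiv_X_self, map_add, pd01, pd10, mul_zero, zero_mul, add_zero, zero_add, mul_one, one_mul, Nat.cast_ofNat]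
    simp only [map_mul, map_add, map_sub, map_neg, map_pow, map_ofNat, map_one]
    ring
  have hpxy : pderiv 1 ((C (4*a40) * X 0 ^ 3 + C (3*a31) * X 0 ^ 2 * X 1 + C (2*a22) * X 0 * X 1 ^ 2 + C (a13) * X 1 ^ 3 : MvPolynomial (Fin 2) ℂ)) = C (3*a31) * X 0 ^ 2 + C (4*a22) * X 0 * X 1 + C (3*a13) * X 1 ^ 2 := by
    simp only [pderiv_mul, pderiv_pow, pderiv_C, pderiv_X_self, map_add, pd01, pd10, mul_zero, zero_mul, add_zero, zero_add, mul_one, one_mul, Nat.cast_ofNat]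
    simp only [map_mul, map_add, map_sub, map_neg, map_pow, map_ofNat, map_one]
    ring
  have hpyy : pderiv 1 ((C (a31) * X 0 ^ 3 + C (2*a22) * X 0 ^ 2 * X 1 + C (3*a13) * X 0 * X 1 ^ 2 + C (4*a04) * X 1 ^ 3 : MvPolynomial (Fin 2) ℂ)) = C (2*a22) * X 0 ^ 2 + C (6*a13) * X 0 * X 1 + C (12*a04) * X 1 ^ 2 := by
    simp only [pderiv_mul, pderiv_pow, pderiv_C, pderiv_X_self, map_add, pd01, pd10, mul_zero, zero_mul, add_zero, zero_add, mul_one, one_mul, Nat.cast_ofNat]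
    simp only [map_mul, map_add, map_sub, map_neg, map_pow, map_ofNat, map_one]
    ring
  have hq2x : pderiv 0 ((C (c0) * X 0 ^ 4 + C (c1) * X 0 ^ 3 * X 1 + C (c2) * X 0 ^ 2 * X 1 ^ 2 + C (c3) * X 0 * X 1 ^ 3 + C (c4) * X 1 ^ 4 : MvPolynomial (Fin 2) ℂ)) = C (4*c0) * X 0 ^ 3 + C (3*c1) * X 0 ^ 2 * X 1 + C (2*c2) * X 0 * X 1 ^ 2 + C (c3) * X 1 ^ 3 := by
    simp only [pderiv_mul, pderiv_pow, pderiv_C, pderiv_X_self, map_add, pd01, pd10, mul_zero, zero_mul, add_zero, zero_add, mul_one, one_mul, Nat.cast_ofNat]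
    simp only [map_mul, map_add, map_sub, map_neg, map_pow, map_ofNat, map_one]
    ring
  have hq2y : pderiv 1 ((C (c0) * X 0 ^ 4 + C (c1) * X 0 ^ 3 * X 1 + C (c2) * X 0 ^ 2 * X 1 ^ 2 + C (c3) * X 0 * X 1 ^ 3 + C (c4) * X 1 ^ 4 : MvPolynomial (Fin 2) ℂ)) = C (c1) * X 0 ^ 3 + C (2*c2) * X 0 ^ 2 * X 1 + C (3*c3) * X 0 * X 1 ^ 2 + C (4*c4) * X 1 ^ 3 := by
    simp only [pderiv_mul, pderiv_pow, pderiv_C, pderiv_X_self, map_add, pd01, pd10, mul_zero, zero_mul, add_zero, zero_add, mul_one, one_mul, Nat.cast_ofNat]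
    simp only [map_mul, map_add, map_sub, map_neg, map_pow, map_ofNat, map_one]
    ring
  have hJ2 : J2 = C (c0) * X 0 ^ 4 + C (c1) * X 0 ^ 3 * X 1 + C (c2) * X 0 ^ 2 * X 1 ^ 2 + C (c3) * X 0 * X 1 ^ 3 + C (c4) * X 1 ^ 4 := by
    simp only [J2, φx, φy]
    rw [hφ, hpx, hpy, hpxx, hpxy, hpyy, hc0, hc1, hc2, hc3, hc4]
    simp only [map_mul, map_add, map_sub, map_neg, map_pow, map_ofNat, map_one]
    ring
  have hJ3 : J3 = C (d0) * X 0 ^ 6 + C (d1) * X 0 ^ 5 * X 1 + C (d2) * X 0 ^ 4 * X 1 ^ 2 + C (d3) * X 0 ^ 3 * X 1 ^ 3 + C (d4) * X 0 ^ 2 * X 1 ^ 4 + C (d5) * X 0 * X 1 ^ 5 + C (d6) * X 1 ^ 6 := by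
    simp only [J3, φx, φy]
    rw [hφ, hJ2, hq2x, hq2y, hpx, hpy, hc0, hc1, hc2, hc3, hc4, hd0, hd1, hd2, hd3, hd4, hd5, hd6]
    simp only [map_mul, map_add, map_sub, map_neg, map_pow, map_ofNat, map_one]
    ring
  obtain ⟨e0, he0⟩ : ∃ x : ℂ, x = 1990656*a40^4*a22*a04 - 746496*a40^4*a13^2 - 746496*a40^3*a31^2*a04 + 248832*a40^3*a31*a22*a13 - 55296*a40^3*a22^3 - 82944*a40^3*a04*c0 + 20736*a40^2*a31*a13*c0 - 6912*a40^2*a22^2*c0 + 16*c0^3 + 9*d0^2 := ⟨_, rfl⟩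
  have hE0 : e0 = 0 := by
    rw [he0, hc0, hd0]; ring
  obtain ⟨e1, he1⟩ : ∃ x : ℂ, x = 5971968*a40^3*a31*a22*a04 - 2239488*a40^3*a31*a13^2 - 82944*a40^3*a04*c1 - 2239488*a40^2*a31^3*a04 + 746496*a40^2*a31^2*a22*a13 - 165888*a40^2*a31*a22^3 + 20736*a40^2*a31*a13*c1 - 165888*a40^2*a31*a04*c0 - 6912*a40^2*a22^2*c1 + 41472*a40*a31^2*a13*c0 - 13824*a40*a31*a22^2*c0 + 48*c0^2*c1 + 18*d0*d1 := ⟨_, rfl⟩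
  have hE1 : e1 = 0 := by
    rw [he1, hc0, hc1, hd0, hd1]; ring
  obtain ⟨e2, he2⟩ : ∃ x : ℂ, x = 5971968*a40^3*a22^2*a04 - 2239488*a40^3*a22*a13^2 - 82944*a40^3*a04*c2 + 3732480*a40^2*a31^2*a22*a04 - 2239488*a40^2*a31^2*a13^2 + 746496*a40^2*a31*a22^2*a13 + 20736*a40^2*a31*a13*c2 - 165888*a40^2*a31*a04*c1 - 165888*a40^2*a22^4 - 6912*a40^2*a22^2*c2 - 165888*a40^2*a22*a04*c0 - 2239488*a40*a31^4*a04 + 746496*a40*a31^3*a22*a13 - 165888*a40*a31^2*a22^3 + 41472*a40*a31^2*a13*c1 - 82944*a40*a31^2*a04*c0 - 13824*a40*a31*a22^2*c1 + 41472*a40*a31*a22*a13*c0 - 13824*a40*a22^3*c0 + 20736*a31^3*a13*c0 - 6912*a31^2*a22^2*c0 + 48*c0^2*c2 + 48*c0*c1^2 + 18*d0*d2 + 9*d1^2 := ⟨_, rfl⟩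
  have hE2 : e2 = 0 := by
    rw [he2, hc0, hc1, hc2, hd0, hd1, hd2]; ring
  obtain ⟨e3, he3⟩ : ∃ x : ℂ, x = 5971968*a40^3*a22*a13*a04 - 2239488*a40^3*a13^3 - 82944*a40^3*a04*c3 - 2239488*a40^2*a31^2*a13*a04 + 11943936*a40^2*a31*a22^2*a04 - 3732480*a40^2*a31*a22*a13^2 + 20736*a40^2*a31*a13*c3 - 165888*a40^2*a31*a04*c2 - 165888*a40^2*a22^3*a13 - 6912*a40^2*a22^2*c3 - 165888*a40^2*a22*a04*c1 - 165888*a40^2*a13*a04*c0 - 2488320*a40*a31^3*a22*a04 - 746496*a40*a31^3*a13^2 + 1492992*a40*a31^2*a22^2*a13 + 41472*a40*a31^2*a13*c2 - 82944*a40*a31^2*a04*c1 - 331776*a40*a31*a22^4 - 13824*a40*a31*a22^2*c2 + 41472*a40*a31*a22*a13*c1 - 165888*a40*a31*a22*a04*c0 + 41472*a40*a31*a13^2*c0 - 13824*a40*a22^3*c1 - 13824*a40*a22^2*a13*c0 - 746496*a31^5*a04 + 248832*a31^4*a22*a13 - 55296*a31^3*a22^3 + 20736*a31^3*a13*c1 -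 6912*a31^2*a22^2*c1 + 41472*a31^2*a22*a13*c0 - 13824*a31*a22^3*c0 + 48*c0^2*c3 + 96*c0*c1*c2 + 16*c1^3 + 18*d0*d3 + 18*d1*d2 := ⟨_, rfl⟩
  have hE3 : e3 = 0 := by
    rw [he3, hc0, hc1, hc2, hc3, hd0, hd1, hd2, hd3]; ring
  obtain ⟨e4, he4⟩ : ∃ x : ℂ, x = 5971968*a40^3*a22*a04^2 - 2239488*a40^3*a13^2*a04 - 82944*a40^3*a04*c4 - 2239488*a40^2*a31^2*a04^2 + 12690432*a40^2*a31*a22*a13*a04 - 4478976*a40^2*a31*a13^3 + 20736*a40^2*a31*a13*c4 - 165888*a40^2*a31*a04*c3 + 5806080*a40^2*a22^3*a04 - 2239488*a40^2*a22^2*a13^2 - 6912*a40^2*a22^2*c4 - 165888*a40^2*a22*a04*c2 - 165888*a40^2*a13*a04*c1 - 165888*a40^2*a04^2*c0 - 4478976*a40*a31^3*a13*a04 + 3732480*a40*a31^2*a22^2*a04 - 746496*a40*a31^2*a22*a13^2 + 41472*a40*a31^2*a13*c3 - 82944*a40*a31^2*a04*c2 + 414720*a40*a31*a22^3*a13 -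 13824*a40*a31*a22^2*c3 + 41472*a40*a31*a22*a13*c2 - 165888*a40*a31*a22*a04*c1 + 41472*a40*a31*a13^2*c1 - 124416*a40*a31*a13*a04*c0 - 165888*a40*a22^5 - 13824*a40*a22^3*c2 - 13824*a40*a22^2*a13*c1 - 96768*a40*a22^2*a04*c0 - 2239488*a31^4*a22*a04 + 746496*a31^3*a22^2*a13 + 20736*a31^3*a13*c2 - 165888*a31^2*a22^4 - 6912*a31^2*a22^2*c2 + 41472*a31^2*a22*a13*c1 + 41472*a31^2*a13^2*c0 - 13824*a31*a22^3*c1 + 6912*a31*a22^2*a13*c0 - 6912*a22^4*c0 + 48*c0^2*c4 + 96*c0*c1*c3 + 48*c0*c2^2 + 48*c1^2*c2 + 18*d0*d4 + 18*d1*d3 + 9*d2^2 := ⟨_, rfl⟩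
  have hE4 : e4 = 0 := by
    rw [he4, hc0, hc1, hc2, hc3, hc4, hd0, hd1, hd2, hd3, hd4]; ring
  obtain ⟨e5, he5⟩ : ∃ x : ℂ, x = 11943936*a40^2*a31*a22*a04^2 - 4478976*a40^2*a31*a13^2*a04 - 165888*a40^2*a31*a04*c4 + 11943936*a40^2*a22^2*a13*a04 - 4478976*a40^2*a22*a13^3 - 165888*a40^2*a22*a04*c3 - 165888*a40^2*a13*a04*c2 - 165888*a40^2*a04^2*c1 - 4478976*a40*a31^3*a04^2 + 2985984*a40*a31^2*a22*a13*a04 - 2239488*a40*a31^2*a13^3 + 41472*a40*a31^2*a13*c4 - 82944*a40*a31^2*a04*c3 + 5640192*a40*a31*a22^3*a04 - 746496*a40*a31*a22^2*a13^2 - 13824*a40*a31*a22^2*c4 + 41472*a40*a31*a22*a13*c3 - 165888*a40*a31*a22*a04*c2 + 41472*a40*a31*a13^2*c2 - 124416*a40*a31*a13*a04*c1 - 165888*a40*a31*a04^2*c0 - 331776*a40*a22^4*a13 - 13824*a40*a22^3*c3 - 13824*a40*a22^2*a13*c2 - 96768*a40*a22^2*a04*c1 - 165888*a40*a22*a13*a04*c0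 - 2239488*a31^4*a13*a04 - 2239488*a31^3*a22^2*a04 + 746496*a31^3*a22*a13^2 + 20736*a31^3*a13*c3 + 580608*a31^2*a22^3*a13 - 6912*a31^2*a22^2*c3 + 41472*a31^2*a22*a13*c2 + 41472*a31^2*a13^2*c1 + 41472*a31^2*a13*a04*c0 - 165888*a31*a22^5 - 13824*a31*a22^3*c2 + 6912*a31*a22^2*a13*c1 - 13824*a31*a22^2*a04*c0 + 41472*a31*a22*a13^2*c0 - 6912*a22^4*c1 - 13824*a22^3*a13*c0 + 96*c0*c1*c4 + 96*c0*c2*c3 + 48*c1^2*c3 + 48*c1*c2^2 + 18*d0*d5 + 18*d1*d4 + 18*d2*d3 := ⟨_, rfl⟩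
  have hE5 : e5 = 0 := by
    rw [he5, hc0, hc1, hc2, hc3, hc4, hd0, hd1, hd2, hd3, hd4, hd5]; ring
  obtain ⟨e6, he6⟩ : ∃ x : ℂ, x = 11943936*a40^2*a22^2*a04^2 + 1492992*a40^2*a22*a13^2*a04 - 165888*a40^2*a22*a04*c4 - 2239488*a40^2*a13^4 - 165888*a40^2*a13*a04*c3 - 165888*a40^2*a04^2*c2 + 1492992*a40*a31^2*a22*a04^2 - 4478976*a40*a31^2*a13^2*a04 - 82944*a40*a31^2*a04*c4 + 13436928*a40*a31*a22^2*a13*a04 - 3732480*a40*a31*a22*a13^3 + 41472*a40*a31*a22*a13*c4 - 165888*a40*a31*a22*a04*c3 + 41472*a40*a31*a13^2*c3 - 124416*a40*a31*a13*a04*c2 - 165888*a40*a31*a04^2*c1 + 1658880*a40*a22^4*a04 - 912384*a40*a22^3*a13^2 - 13824*a40*a22^3*c4 - 13824*a40*a22^2*a13*c3 - 96768*a40*a22^2*a04*c2 - 165888*a40*a22*a13*a04*c1 - 165888*a40*a22*a04^2*c0 - 82944*a40*a13^2*a04*c0 - 2239488*a31^4*a04^2 - 3732480*a31^3*a22*a13*a04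 + 20736*a31^3*a13*c4 - 912384*a31^2*a22^3*a04 + 1492992*a31^2*a22^2*a13^2 - 6912*a31^2*a22^2*c4 + 41472*a31^2*a22*a13*c3 + 41472*a31^2*a13^2*c2 + 41472*a31^2*a13*a04*c1 - 82944*a31*a22^4*a13 - 13824*a31*a22^3*c3 + 6912*a31*a22^2*a13*c2 - 13824*a31*a22^2*a04*c1 + 41472*a31*a22*a13^2*c1 + 41472*a31*a22*a13*a04*c0 + 20736*a31*a13^3*c0 - 55296*a22^6 - 6912*a22^4*c2 - 13824*a22^3*a13*c1 - 13824*a22^3*a04*c0 - 6912*a22^2*a13^2*c0 + 96*c0*c2*c4 + 48*c0*c3^2 + 48*c1^2*c4 + 96*c1*c2*c3 + 16*c2^3 + 18*d0*d6 + 18*d1*d5 + 18*d2*d4 + 9*d3^2 := ⟨_, rfl⟩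
  have hE6 : e6 = 0 := by
    rw [he6, hc0, hc1, hc2, hc3, hc4, hd0, hd1, hd2, hd3, hd4, hd5, hd6]; ring
  obtain ⟨e7, he7⟩ : ∃ x : ℂ, x = 11943936*a40^2*a22*a13*a04^2 - 4478976*a40^2*a13^3*a04 - 165888*a40^2*a13*a04*c4 - 165888*a40^2*a04^2*c3 - 4478976*a40*a31^2*a13*a04^2 + 11943936*a40*a31*a22^2*a04^2 + 2985984*a40*a31*a22*a13^2*a04 - 165888*a40*a31*a22*a04*c4 - 2239488*a40*a31*a13^4 + 41472*a40*a31*a13^2*c4 - 124416*a40*a31*a13*a04*c3 - 165888*a40*a31*a04^2*c2 + 5640192*a40*a22^3*a13*a04 - 2239488*a40*a22^2*a13^3 - 13824*a40*a22^2*a13*c4 - 96768*a40*a22^2*a04*c3 - 165888*a40*a22*a13*a04*c2 - 165888*a40*a22*a04^2*c1 - 82944*a40*a13^2*a04*c1 - 165888*a40*a13*a04^2*c0 - 4478976*a31^3*a22*a04^2 - 2239488*a31^3*a13^2*a04 - 746496*a31^2*a22^2*a13*a04 + 746496*a31^2*a22*a13^3 + 41472*a31^2*a22*a13*c4 + 41472*a31^2*a13^2*c3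 + 41472*a31^2*a13*a04*c2 - 331776*a31*a22^4*a04 + 580608*a31*a22^3*a13^2 - 13824*a31*a22^3*c4 + 6912*a31*a22^2*a13*c3 - 13824*a31*a22^2*a04*c2 + 41472*a31*a22*a13^2*c2 + 41472*a31*a22*a13*a04*c1 + 20736*a31*a13^3*c1 + 41472*a31*a13^2*a04*c0 - 165888*a22^5*a13 - 6912*a22^4*c3 - 13824*a22^3*a13*c2 - 13824*a22^3*a04*c1 - 6912*a22^2*a13^2*c1 - 13824*a22^2*a13*a04*c0 + 96*c0*c3*c4 + 96*c1*c2*c4 + 48*c1*c3^2 + 48*c2^2*c3 + 18*d1*d6 + 18*d2*d5 + 18*d3*d4 := ⟨_, rfl⟩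
  have hE7 : e7 = 0 := by
    rw [he7, hc0, hc1, hc2, hc3, hc4, hd1, hd2, hd3, hd4, hd5, hd6]; ring
  obtain ⟨e8, he8⟩ : ∃ x : ℂ, x = 5971968*a40^2*a22*a04^3 - 2239488*a40^2*a13^2*a04^2 - 165888*a40^2*a04^2*c4 - 2239488*a40*a31^2*a04^3 + 12690432*a40*a31*a22*a13*a04^2 - 4478976*a40*a31*a13^3*a04 - 124416*a40*a31*a13*a04*c4 - 165888*a40*a31*a04^2*c3 + 5806080*a40*a22^3*a04^2 + 3732480*a40*a22^2*a13^2*a04 - 96768*a40*a22^2*a04*c4 - 2239488*a40*a22*a13^4 - 165888*a40*a22*a13*a04*c3 - 165888*a40*a22*a04^2*c2 - 82944*a40*a13^2*a04*c2 - 165888*a40*a13*a04^2*c1 - 82944*a40*a04^3*c0 - 4478976*a31^3*a13*a04^2 - 2239488*a31^2*a22^2*a04^2 - 746496*a31^2*a22*a13^2*a04 + 41472*a31^2*a13^2*c4 + 41472*a31^2*a13*a04*c3 + 414720*a31*a22^3*a13*a04 + 746496*a31*a22^2*a13^3 + 6912*a31*a22^2*a13*c4 - 13824*a31*a22^2*a04*c3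 + 41472*a31*a22*a13^2*c3 + 41472*a31*a22*a13*a04*c2 + 20736*a31*a13^3*c2 + 41472*a31*a13^2*a04*c1 + 20736*a31*a13*a04^2*c0 - 165888*a22^5*a04 - 165888*a22^4*a13^2 - 6912*a22^4*c4 - 13824*a22^3*a13*c3 - 13824*a22^3*a04*c2 - 6912*a22^2*a13^2*c2 - 13824*a22^2*a13*a04*c1 - 6912*a22^2*a04^2*c0 + 48*c0*c4^2 + 96*c1*c3*c4 + 48*c2^2*c4 + 48*c2*c3^2 + 18*d2*d6 + 18*d3*d5 + 9*d4^2 := ⟨_, rfl⟩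
  have hE8 : e8 = 0 := by
    rw [he8, hc0, hc1, hc2, hc3, hc4, hd2, hd3, hd4, hd5, hd6]; ring
  obtain ⟨e9, he9⟩ : ∃ x : ℂ, x = 5971968*a40*a31*a22*a04^3 - 2239488*a40*a31*a13^2*a04^2 - 165888*a40*a31*a04^2*c4 + 11943936*a40*a22^2*a13*a04^2 - 2488320*a40*a22*a13^3*a04 - 165888*a40*a22*a13*a04*c4 - 165888*a40*a22*a04^2*c3 - 746496*a40*a13^5 - 82944*a40*a13^2*a04*c3 - 165888*a40*a13*a04^2*c2 - 82944*a40*a04^3*c1 - 2239488*a31^3*a04^3 - 3732480*a31^2*a22*a13*a04^2 - 746496*a31^2*a13^3*a04 + 41472*a31^2*a13*a04*c4 - 165888*a31*a22^3*a04^2 + 1492992*a31*a22^2*a13^2*a04 - 13824*a31*a22^2*a04*c4 + 248832*a31*a22*a13^4 + 41472*a31*a22*a13^2*c4 + 41472*a31*a22*a13*a04*c3 + 20736*a31*a13^3*c3 + 41472*a31*a13^2*a04*c2 + 20736*a31*a13*a04^2*c1 - 331776*a22^4*a13*a04 - 55296*a22^3*a13^3 - 13824*a22^3*a13*c4 - 13824*a22^3*a04*c3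 - 6912*a22^2*a13^2*c3 - 13824*a22^2*a13*a04*c2 - 6912*a22^2*a04^2*c1 + 48*c1*c4^2 + 96*c2*c3*c4 + 16*c3^3 + 18*d3*d6 + 18*d4*d5 := ⟨_, rfl⟩
  have hE9 : e9 = 0 := by
    rw [he9, hc1, hc2, hc3, hc4, hd3, hd4, hd5, hd6]; ring
  obtain ⟨e10, he10⟩ : ∃ x : ℂ, x = 5971968*a40*a22^2*a04^3 + 3732480*a40*a22*a13^2*a04^2 - 165888*a40*a22*a04^2*c4 - 2239488*a40*a13^4*a04 - 82944*a40*a13^2*a04*c4 - 165888*a40*a13*a04^2*c3 - 82944*a40*a04^3*c2 - 2239488*a31^2*a22*a04^3 - 2239488*a31^2*a13^2*a04^2 + 746496*a31*a22^2*a13*a04^2 + 746496*a31*a22*a13^3*a04 + 41472*a31*a22*a13*a04*c4 + 20736*a31*a13^3*c4 + 41472*a31*a13^2*a04*c3 + 20736*a31*a13*a04^2*c2 - 165888*a22^4*a04^2 - 165888*a22^3*a13^2*a04 - 13824*a22^3*a04*c4 - 6912*a22^2*a13^2*c4 - 13824*a22^2*a13*a04*c3 - 6912*a22^2*a04^2*c2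 + 48*c2*c4^2 + 48*c3^2*c4 + 18*d4*d6 + 9*d5^2 := ⟨_, rfl⟩
  have hE10 : e10 = 0 := by
    rw [he10, hc2, hc3, hc4, hd4, hd5, hd6]; ring
  obtain ⟨e11, he11⟩ : ∃ x : ℂ, x = 5971968*a40*a22*a13*a04^3 - 2239488*a40*a13^3*a04^2 - 165888*a40*a13*a04^2*c4 - 82944*a40*a04^3*c3 - 2239488*a31^2*a13*a04^3 + 746496*a31*a22*a13^2*a04^2 + 41472*a31*a13^2*a04*c4 + 20736*a31*a13*a04^2*c3 - 165888*a22^3*a13*a04^2 - 13824*a22^2*a13*a04*c4 - 6912*a22^2*a04^2*c3 + 48*c3*c4^2 + 18*d5*d6 := ⟨_, rfl⟩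
  have hE11 : e11 = 0 := by
    rw [he11, hc3, hc4, hd5, hd6]; ring
  obtain ⟨e12, he12⟩ : ∃ x : ℂ, x = 1990656*a40*a22*a04^4 - 746496*a40*a13^2*a04^3 - 82944*a40*a04^3*c4 - 746496*a31^2*a04^4 + 248832*a31*a22*a13*a04^3 + 20736*a31*a13*a04^2*c4 - 55296*a22^3*a04^3 - 6912*a22^2*a04^2*c4 + 16*c4^3 + 9*d6^2 := ⟨_, rfl⟩
  have hE12 : e12 = 0 := by
    rw [he12, hc4, hd6]; ring
  have h2 : C (e0) * X 0 ^ 12 * 1 + C (e1) * X 0 ^ 11 * X 1 + C (e2) * X 0 ^ 10 * X 1 ^ 2 + C (e3) * X 0 ^ 9 * X 1 ^ 3 + C (e4) * X 0 ^ 8 * X 1 ^ 4 + C (e5) * X 0 ^ 7 * X 1 ^ 5 + C (e6) * X 0 ^ 6 * X 1 ^ 6 + C (e7) * X 0 ^ 5 * X 1 ^ 7 + C (e8) * X 0 ^ 4 * X 1 ^ 8 + C (e9) * X 0 ^ 3 * X 1 ^ 9 + C (e10) * X 0 ^ 2 * X 1 ^ 10 + C (e11) * X 0 * X 1 ^ 11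 + C (e12) * X 1 ^ 12 = (0 : MvPolynomial (Fin 2) ℂ) := by
    simp only [hE0, hE1, hE2, hE3, hE4, hE5, hE6, hE7, hE8, hE9, hE10, hE11, hE12, map_zero, zero_mul, add_zero, zero_add]
  simp only [J0, α, δ]
  rw [hφ, hJ2, hJ3, ← h2, he0, he1, he2, he3, he4, he5, he6, he7, he8, he9, he10, he11, he12, hc0, hc1, hc2, hc3, hc4, hd0, hd1, hd2, hd3, hd4, hd5, hd6]
  simp only [map_mul, map_add, map_sub, map_neg, map_pow, map_ofNat, map_one]
  ring
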